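/- For every integer k ≥ 1, let C_k(n) denote the number of pinned solus bitstrings of length n whose maxrun is strictly less than k, with the convention C_k(0) = 1 (the empty string is counted). Then in the ring of formal power series over ℤ, (Σ_{n≥0} C_k(n) z^n) · (1 − z − z² + z^{k+1}) = 1 − z² − z^k + z^{k+1}. -/

import Mathlib

/-- Number of 0s in a bitstring (`false` represents 0, `true` represents 1). -/
def zeros (s : List Bool) : ℕ := s.count false

/-- Length of the longest run of consecutive 0s in a bitstring
(0 if the string has no 0s). -/
def maxrun (s : List Bool) : ℕ := ((s.splitOn true).map List.length).foldr max 0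


/-- A bitstring is pinned if it is nonempty and both its first and last bits are 0. -/
def Pinned (s : List Bool) : Prop :=
  s ≠ [] ∧ s.head? = some false ∧ s.getLast? = some false


/-- A bitstring is solus if it has no two adjacent 1s. -/
def Solus (s : List Bool) : Prop := s.Chain' fun a b => ¬(a = true ∧ b = true)

/-- `C k n` is the number of pinned solus bitstrings of length `n` whose longest
run of 0s is strictly less than `k`, with the convention `C k 0 = 1`. -/
noncomputable def C (k n : ℕ) : ℕ :=
  if n = 0 then 1 else
    Nat.card {s : List Bool // s.length = n ∧ Pinned s ∧ Solus s ∧ maxrun s < k}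

lemma maxrun_replicate (m : ℕ) : maxrun (List.replicate m false) = m := by
  unfold maxrun
  rw [List.splitOn, List.splitOnP_eq_single]
  · simp
  · intro x hx; simp [List.eq_of_mem_replicate hx]

lemma maxrun_decomp (a : ℕ) (t : List Bool) :
    maxrun (List.replicate a false ++ true :: t) = max a (maxrun t) := by
  unfold maxrun
  rw [List.splitOn, List.splitOnP_first]
  · simp [List.splitOn]
  · intro x hx; simp [List.eq_of_mem_replicate hx]
  · simp

lemma solus_replicate (m : ℕ) : Solus (List.replicate m false) := by
  induction m with
  | zero => exact List.isChain_nil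
  | succ n ih =>
    rw [List.replicate_succ]
    refine List.isChain_cons.2 ⟨?_, ih⟩
    intro b _; simp

lemma rep_cancel : ∀ (a a' : ℕ) (t t' : List Bool),
    List.replicate a false ++ true :: t = List.replicate a' false ++ true :: t' →
    a = a' ∧ t = t' := by
  intro a
  induction a with
  | zero =>
    intro a' t t' h
    cases a' with
    | zero => simpa using h
    | succ m => rw [List.replicate_succ] at h; simp at h
  | succ n ih =>
    intro a' t t' h
    cases a' with
    | zero => rw [List.replicate_succ] at h; simp at h
    | succ m =>
      rw [List.replicate_succ, List.replicate_succ] at h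
      simp only [List.cons_append, List.cons.injEq] at h
      obtain ⟨ha, ht⟩ := ih m t t' h.2
      exact ⟨by omega, ht⟩

/-- forward construction: building a valid string from a valid tail -/
lemma build_valid (k a : ℕ) (t : List Bool) (ha1 : 1 ≤ a) (hak : a < k)
    (hp : Pinned t) (hs : Solus t) (hr : maxrun t < k) :
    Pinned (List.replicate a false ++ true :: t) ∧
    Solus (List.replicate a false ++ true :: t) ∧
    maxrun (List.replicate a false ++ true :: t) < k := by
  obtain ⟨hne, hhead, hlast⟩ := hp
  refine ⟨⟨by simp, ?_, ?_⟩, ?_, ?_⟩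
  · obtain ⟨b, rfl⟩ := Nat.exists_eq_add_of_le ha1
    rw [add_comm, List.replicate_succ]
    simp
  · rw [List.getLast?_append_of_ne_nil _ (by simp)]
    rw [show (true :: t : List Bool) = [true] ++ t from rfl,
      List.getLast?_append_of_ne_nil _ hne]
    exact hlast
  · refine List.isChain_append.2 ⟨solus_replicate a, ?_, ?_⟩
    · refine List.isChain_cons.2 ⟨?_, hs⟩
      intro b hb
      rw [hhead] at hb
      simp_all
    · intro x hx y hy
      simp only [List.head?_cons, Option.mem_def, Option.some.injEq] at hy
      subst hy
      have : x = false := by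
        have := List.mem_of_mem_getLast? hx
        exact List.eq_of_mem_replicate this
      simp [this]
  · rw [maxrun_decomp]
    omega

lemma decomp_valid (k : ℕ) (s : List Bool) (hpin : Pinned s) (hsol : Solus s)
    (hrun : maxrun s < k) :
    (s = List.replicate s.length false ∧ s.length < k) ∨
    (∃ a t, 1 ≤ a ∧ a < k ∧ Pinned t ∧ Solus t ∧ maxrun t < k ∧
      s = List.replicate a false ++ true :: t) := by
  obtain ⟨hne, hhead, hlast⟩ := hpin
  by_cases htrue : true ∈ s
  · right
    -- split at first true
    have hsplit : s.takeWhile (fun b => !b) ++ s.dropWhile (fun b => !b) = s :=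
      List.takeWhile_append_dropWhile (p := fun b => !b) (l := s)
    have hrne : s.dropWhile (fun b => !b) ≠ [] := by
      intro h
      have hall := List.dropWhile_eq_nil_iff.1 h
      have := hall true htrue
      simp at this
    obtain ⟨v, hv⟩ : ∃ v, s.dropWhile (fun b => !b) = true :: v := by
      have hh := List.head_dropWhile_not (fun b => !b) (l := s) hrne
      cases hd : s.dropWhile (fun b => !b) with
      | nil => exact absurd hd hrne
      | cons x v =>
        refine ⟨v, ?_⟩
        have hh2 : (s.dropWhile (fun b => !b)).head? = some x := by rw [hd]; rfl
        have hh3 : (s.dropWhile (fun b => !b)).head hrne = x := by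
          have := List.head?_eq_head (l := s.dropWhile (fun b => !b)) hrne
          rw [hh2] at this
          exact (Option.some.inj this).symm
        rw [hh3] at hh
        have hx : x = true := by
          cases x
          · simp at hh
          · rfl
        rw [hx]
    have hurep : s.takeWhile (fun b => !b)
        = List.replicate (s.takeWhile (fun b => !b)).length false := by
      refine List.eq_replicate_length.2 ?_
      intro x hx
      have := List.mem_takeWhile_imp hx
      simpa using this
    set a := (s.takeWhile (fun b => !b)).length with halen
    have hs_eq : s = List.replicate a false ++ true :: v := by
      rw [← hsplit, ← hurep, hv]
    have ha1 : 1 ≤ a := by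
      rcases s with _ | ⟨b, s'⟩
      · exact absurd rfl hne
      · simp only [List.head?_cons, Option.some.injEq] at hhead
        subst hhead
        rw [halen, List.takeWhile_cons_of_pos (by simp)]
        simp
    -- properties of v
    have hmax : maxrun s = max a (maxrun v) := by rw [hs_eq, maxrun_decomp]
    have hak : a < k := by omega
    have hvrun : maxrun v < k := by omega
    have hvsol : Solus v := by
      rw [hs_eq] at hsol
      have := (List.isChain_append.1 hsol).2.1
      exact (List.isChain_cons.1 this).2
    have hvhead : v.head? = some false := by
      rw [hs_eq] at hsol
      have h2 := (List.isChain_append.1 hsol).2.1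
      have h3 := (List.isChain_cons.1 h2).1
      cases hvh : v.head? with
      | none =>
        have hvnil : v = [] := List.head?_eq_none_iff.1 hvh
        rw [hs_eq, hvnil] at hlast
        rw [List.getLast?_append_of_ne_nil _ (by simp)] at hlast
        simp at hlast
      | some b =>
        cases b with
        | false => rfl
        | true => exact absurd ⟨rfl, rfl⟩ (h3 true hvh)
    have hvne : v ≠ [] := by
      intro h; rw [h] at hvhead; simp at hvhead
    have hvlast : v.getLast? = some false := by
      rw [hs_eq, List.getLast?_append_of_ne_nil _ (by simp),
        show (true :: v : List Bool) = [true] ++ v from rfl,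
        List.getLast?_append_of_ne_nil _ hvne] at hlast
      exact hlast
    exact ⟨a, v, ha1, hak, ⟨hvne, hvhead, hvlast⟩, hvsol, hvrun, hs_eq⟩
  · left
    have hrep : s = List.replicate s.length false := by
      refine List.eq_replicate_length.2 ?_
      intro x hx
      cases x with
      | false => rfl
      | true => exact absurd hx htrue
    refine ⟨hrep, ?_⟩
    have h2 : maxrun s = s.length := by
      rw [hrep, maxrun_replicate]
      simp
    omega

abbrev SS (k n : ℕ) : Type :=
  {s : List Bool // s.length = n ∧ Pinned s ∧ Solus s ∧ maxrun s < k}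

instance SS_finite (k n : ℕ) : Finite (SS k n) := by
  have h : {s : List Bool | s.length = n ∧ Pinned s ∧ Solus s ∧ maxrun s < k}.Finite :=
    Set.Finite.subset (List.finite_length_eq Bool n) (fun s hs => hs.1)
  exact h.to_subtype

lemma SS_zero_empty (k : ℕ) : IsEmpty (SS k 0) := by
  constructor
  rintro ⟨s, hlen, ⟨hne, -, -⟩, -⟩
  exact hne (List.length_eq_zero_iff.1 hlen)

lemma card_SS_zero (k : ℕ) : Nat.card (SS k 0) = 0 := by
  have := SS_zero_empty k
  simp [Nat.card_eq_zero]

lemma pinned_replicate (m : ℕ) (hm : 1 ≤ m) : Pinned (List.replicate m false) := by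
  obtain ⟨j, rfl⟩ := Nat.exists_eq_add_of_le hm
  refine ⟨by simp, ?_, ?_⟩
  · rw [add_comm, List.replicate_succ]; rfl
  · rw [add_comm, List.replicate_succ', List.getLast?_append_of_ne_nil _ (by simp)]
    rfl

lemma card_rec (k n : ℕ) (hn : 1 ≤ n) :
    Nat.card (SS k n) = (if n < k then 1 else 0)
      + ∑ a ∈ Finset.Ico 1 k, Nat.card (SS k (n - 1 - a)) := by
  classical
  -- the bijection
  let f : PLift (n < k) ⊕ (Σ a : (Finset.Ico 1 k : Finset ℕ), SS k (n - 1 - (a : ℕ))) → SS k n :=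
    fun x =>
      match x with
      | Sum.inl h =>
        ⟨List.replicate n false, by simp, pinned_replicate n hn, solus_replicate n,
          by rw [maxrun_replicate]; exact h.down⟩
      | Sum.inr ⟨a, t⟩ => by
        refine ⟨List.replicate (a : ℕ) false ++ true :: (t : List Bool), ?_, ?_⟩
        · have h1 : 1 ≤ (a : ℕ) ∧ (a : ℕ) < k := Finset.mem_Ico.1 a.2
          have h2 : (t : List Bool).length ≥ 1 := List.length_pos_iff.2 t.2.2.1.1
          have h3 : (t : List Bool).length = n - 1 - (a : ℕ) := t.2.1
          simp only [List.length_append, List.length_replicate, List.length_cons]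
          omega
        · have h2 := Finset.mem_Ico.1 a.2
          exact build_valid k (a : ℕ) (t : List Bool) h2.1 h2.2 t.2.2.1 t.2.2.2.1 t.2.2.2.2
  have hinj : Function.Injective f := by
    rintro (⟨h⟩ | ⟨a, t⟩) (⟨h'⟩ | ⟨a', t'⟩) hxy
    · exact congrArg Sum.inl (Subsingleton.elim _ _)
    · exfalso
      have hv := congrArg Subtype.val hxy
      simp only [f] at hv
      have htr : true ∈ List.replicate n false := by rw [hv]; simp
      simp at htr
    · exfalso
      have hv := congrArg Subtype.val hxy
      simp only [f] at hv
      have htr : true ∈ List.replicate n false := by rw [← hv]; simp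
      simp at htr
    · have hv := congrArg Subtype.val hxy
      simp only [f] at hv
      obtain ⟨haa, htt⟩ := rep_cancel _ _ _ _ hv
      have ha2 : a = a' := Subtype.ext haa
      subst ha2
      have ht2 : t = t' := Subtype.ext htt
      subst ht2
      rfl
  have hsurj : Function.Surjective f := by
    rintro ⟨s, hlen, hpin, hsol, hrun⟩
    rcases decomp_valid k s hpin hsol hrun with ⟨hrep, hlt⟩ | ⟨a, t, ha1, hak, hpt, hst, hrt, hseq⟩
    · refine ⟨Sum.inl ⟨by rwa [hlen] at hlt⟩, ?_⟩
      apply Subtype.ext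
      simp only [f]
      rw [hrep, hlen]
    · have htlen : t.length = n - 1 - a := by
        have hsl : s.length = a + 1 + t.length := by
          rw [hseq]; simp [List.length_append]; omega
        omega
      refine ⟨Sum.inr ⟨⟨a, Finset.mem_Ico.2 ⟨ha1, hak⟩⟩, ⟨t, htlen, hpt, hst, hrt⟩⟩, ?_⟩
      apply Subtype.ext
      simp only [f]
      exact hseq.symm
  have hcard := Nat.card_congr (Equiv.ofBijective f ⟨hinj, hsurj⟩)
  rw [← hcard]
  haveI : Finite (PLift (n < k)) := Finite.of_subsingleton
  rw [Nat.card_sum]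
  congr 1
  · split_ifs with h
    · haveI : Nonempty (PLift (n < k)) := ⟨⟨h⟩⟩
      exact Nat.card_unique
    · haveI : IsEmpty (PLift (n < k)) := ⟨fun x => h x.down⟩
      exact Nat.card_of_isEmpty
  · haveI : ∀ a : (Finset.Ico 1 k : Finset ℕ), Fintype (SS k (n - 1 - (a : ℕ))) :=
      fun a => Fintype.ofFinite _
    rw [Nat.card_eq_fintype_card, Fintype.card_sigma]
    rw [← Finset.sum_coe_sort (Finset.Ico 1 k) (fun a => Nat.card (SS k (n - 1 - a)))]
    congr 1
    funext a
    rw [Nat.card_eq_fintype_card]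

-- integer-valued card
noncomputable def cz (k m : ℕ) : ℤ := (Nat.card (SS k m) : ℤ)

lemma cz_zero (k : ℕ) : cz k 0 = 0 := by simp [cz, card_SS_zero]

lemma C_cast (k j : ℕ) : (C k j : ℤ) = if j = 0 then 1 else cz k j := by
  unfold C cz
  split_ifs <;> simp

lemma cz_rec (k n : ℕ) (hn : 1 ≤ n) :
    cz k n = (if n < k then 1 else 0) + ∑ a ∈ Finset.Ico 1 k, cz k (n - 1 - a) := by
  unfold cz
  rw [card_rec k n hn]
  push_cast [apply_ite (Nat.cast : ℕ → ℤ)]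
  ring

lemma sumdiff (k n : ℕ) (hk : 2 ≤ k) :
    (∑ a ∈ Finset.Ico 1 k, cz k (n - 1 - a)) - (∑ a ∈ Finset.Ico 1 k, cz k (n - 2 - a))
      = cz k (n - 2) - cz k (n - 1 - k) := by
  rw [Finset.sum_eq_sum_Ico_succ_bot (by omega : 1 < k) (fun a => cz k (n - 1 - a))]
  have h2 : (∑ a ∈ Finset.Ico 1 k, cz k (n - 2 - a))
      = ∑ a ∈ Finset.Ico 2 (k + 1), cz k (n - 1 - a) := by
    rw [← Finset.map_add_right_Ico 1 k 1]
    rw [Finset.sum_map]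
    apply Finset.sum_congr rfl
    intro a _
    congr 1
    simp [addRightEmbedding]
    omega
  rw [h2, Finset.sum_Ico_succ_top (by omega : 2 ≤ k) (fun a => cz k (n - 1 - a))]
  have : n - 1 - 1 = n - 2 := by omega
  rw [this]
  ring

lemma key_rec (k n : ℕ) (hk : 2 ≤ k) (hn : 2 ≤ n) :
    cz k n - cz k (n - 1)
      = (if n < k then 1 else 0) - (if n - 1 < k then 1 else 0)
        + cz k (n - 2) - cz k (n - 1 - k) := by
  have h1 := cz_rec k n (by omega)
  have h2 := cz_rec k (n - 1) (by omega)
  have h3 : ∀ a, n - 1 - 1 - a = n - 2 - a := by intro a; omega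
  rw [h1, h2]
  simp only [h3]
  have := sumdiff k n hk
  linarith [sumdiff k n hk]

lemma cz_one (k : ℕ) : cz k 1 = if 1 < k then 1 else 0 := by
  rw [cz_rec k 1 le_rfl]
  have : ∀ a ∈ Finset.Ico 1 k, cz k (1 - 1 - a) = 0 := by
    intro a _
    have : 1 - 1 - a = 0 := by omega
    rw [this, cz_zero]
  rw [Finset.sum_congr rfl this]
  simp

open PowerSeries in
theorem C_generating_function (k : ℕ) (hk : 1 ≤ k) :
    (PowerSeries.mk fun n => (C k n : ℤ)) * (1 - X - X ^ 2 + X ^ (k + 1))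
      = 1 - X ^ 2 - X ^ k + X ^ (k + 1) := by
  rcases eq_or_lt_of_le hk with hk1 | hk2
  · -- k = 1
    obtain rfl : k = 1 := hk1.symm
    have hF : (PowerSeries.mk fun n => (C 1 n : ℤ)) = 1 := by
      ext n
      cases n with
      | zero => simp [_root_.C]
      | succ m =>
        have h := cz_rec 1 (m + 1) (by omega)
        simp only [Finset.Ico_self, Finset.sum_empty, Nat.lt_one_iff] at h
        rw [PowerSeries.coeff_mk, C_cast]
        have hm : ¬ (m + 1 = 0) := by omega
        rw [if_neg hm, h, if_neg (by omega)]
        simp [PowerSeries.coeff_one, hm]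
    rw [hF]
    ring
  · -- k ≥ 2
    have hk2' : 2 ≤ k := hk2
    have hXone : (1 - X - X ^ 2 + X ^ (k + 1) : ℤ⟦X⟧)
        = 1 - X ^ 1 - X ^ 2 + X ^ (k + 1) := by rw [pow_one]
    rw [hXone]
    ext n
    rw [mul_add, mul_sub, mul_sub, mul_one]
    simp only [map_add, map_sub, PowerSeries.coeff_mul_X_pow', PowerSeries.coeff_one,
      PowerSeries.coeff_X_pow, PowerSeries.coeff_mk, C_cast]
    match n with
    | 0 =>
      rw [if_pos rfl, if_neg (by omega : ¬ 1 ≤ 0), if_neg (by omega : ¬ 2 ≤ 0),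
        if_neg (by omega : ¬ k + 1 ≤ 0), if_pos rfl,
        if_neg (by omega : ¬ (0 : ℕ) = 2), if_neg (by omega : ¬ 0 = k),
        if_neg (by omega : ¬ 0 = k + 1)]
    | 1 =>
      rw [if_neg (by omega : ¬ (1:ℕ) = 0), if_pos (le_refl 1), if_neg (by omega : ¬ 2 ≤ 1),
        if_neg (by omega : ¬ k + 1 ≤ 1)]
      have h10 : (1 : ℕ) - 1 = 0 := rfl
      rw [h10, if_pos rfl]
      rw [if_neg (by omega : ¬ (1:ℕ) = 0), if_neg (by omega : ¬ (1:ℕ) = 2),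
        if_neg (by omega : ¬ 1 = k), if_neg (by omega : ¬ 1 = k + 1)]
      rw [cz_one, if_pos (by omega : 1 < k)]
      ring
    | (m + 2) =>
      have hkey := key_rec k (m + 2) hk2' (by omega)
      have hz := cz_zero k
      rw [if_neg (by omega : ¬ m + 2 = 0), if_pos (by omega : 1 ≤ m + 2),
        if_pos (by omega : 2 ≤ m + 2),
        if_neg (by omega : ¬ m + 2 - 1 = 0)]
      have e1 : m + 2 - 1 = m + 1 := by omega
      have e2 : m + 2 - 2 = m := by omega
      rw [e1, e2] at hkey ⊢
      rw [if_neg (by omega : ¬ m + 2 = 0)]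
      rcases Nat.lt_or_ge (m + 2) k with hnk | hnk
      · -- n < k : also n ≠ k, n ≠ k+1, ¬ k+1 ≤ n
        rw [if_pos hnk, if_pos (by omega : m + 1 < k)] at hkey
        have e3 : m + 1 - k = 0 := by omega
        rw [e3, hz] at hkey
        rw [if_neg (by omega : ¬ k + 1 ≤ m + 2),
          if_neg (by omega : ¬ m + 2 = k), if_neg (by omega : ¬ m + 2 = k + 1)]
        rcases Nat.eq_zero_or_pos m with rfl | hm
        · norm_num at hkey ⊢
          linarith [hkey, hz]
        · rw [if_neg (by omega : ¬ m = 0), if_neg (by omega : ¬ m + 2 = 2)]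
          linarith [hkey]
      · rcases Nat.lt_or_ge k (m + 2) with hnk2 | hnk2
        · rcases Nat.lt_or_ge (k + 1) (m + 2) with hnk3 | hnk3
          · -- n ≥ k + 2
            rw [if_neg (by omega : ¬ m + 2 < k), if_neg (by omega : ¬ m + 1 < k)] at hkey
            rw [if_pos (by omega : k + 1 ≤ m + 2),
              if_neg (by omega : ¬ m + 2 - (k + 1) = 0),
              if_neg (by omega : ¬ m + 2 = 2), if_neg (by omega : ¬ m + 2 = k),
              if_neg (by omega : ¬ m + 2 = k + 1), if_neg (by omega : ¬ m = 0)]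
            have e4 : m + 2 - (k + 1) = m + 1 - k := by omega
            rw [e4]
            linarith [hkey]
          · -- n = k + 1
            have hkk : k = m + 1 := by omega
            rw [if_neg (by omega : ¬ m + 2 < k), if_neg (by omega : ¬ m + 1 < k)] at hkey
            have e3 : m + 1 - k = 0 := by omega
            rw [e3, hz] at hkey
            rw [if_pos (by omega : k + 1 ≤ m + 2),
              if_pos (by omega : m + 2 - (k + 1) = 0),
              if_neg (by omega : ¬ m + 2 = 2), if_neg (by omega : ¬ m + 2 = k),
              if_pos (by omega : m + 2 = k + 1)]
            rcases Nat.eq_zero_or_pos m with rfl | hm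
            · exfalso; omega
            · rw [if_neg (by omega : ¬ m = 0)]
              linarith [hkey]
        · -- n = k
          have hkk : k = m + 2 := by omega
          rw [if_neg (by omega : ¬ m + 2 < k), if_pos (by omega : m + 1 < k)] at hkey
          have e3 : m + 1 - k = 0 := by omega
          rw [e3, hz] at hkey
          rw [if_neg (by omega : ¬ k + 1 ≤ m + 2),
            if_pos (by omega : m + 2 = k),
            if_neg (by omega : ¬ m + 2 = k + 1)]
          rcases Nat.eq_zero_or_pos m with rfl | hm
          · norm_num at hkey ⊢
            linarith [hkey, hz]
          · rw [if_neg (by omega : ¬ m = 0), if_neg (by omega : ¬ m + 2 = 2)]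
            linarith [hkey]
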